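/- Let f : ℝ^d → ℝ be differentiable, L-smooth and μ-strongly convex with 0 < μ ≤ L, and let x_⋆ be its minimizer. For the gradient method x_{k+1} = x_k − (1/L)∇f(x_k), one has ‖x_{k+1} − x_⋆‖ ≤ (1 − μ/L)‖x_k − x_⋆‖ for all k. -/

import Mathlib

open Set InnerProductSpace

local notation "⟪" x ", " y "⟫" => @inner ℝ _ _ x y

section helpers

variable {F : Type*} [NormedAddCommGroup F] [InnerProductSpace ℝ F] [CompleteSpace F]

lemma myLineDeriv {G : F → ℝ} {G' : F → F} (hG : ∀ z, HasGradientAt G (G' z) z)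
    (x u : F) (t : ℝ) :
    HasDerivAt (fun s : ℝ => G (x + s • u)) ⟪G' (x + t • u), u⟫ t := by
  have hline : HasDerivAt (fun s : ℝ => x + s • u) u t := by
    simpa using ((hasDerivAt_id t).smul_const u).const_add x
  have hGz := (hG (x + t • u)).hasFDerivAt
  have := hGz.comp_hasDerivAt t hline
  simpa [toDual_apply_apply, Function.comp_def] using this

/-- Gradient inequality for convex differentiable functions. -/
lemma myGradIneq {G : F → ℝ} {G' : F → F} (hG : ∀ z, HasGradientAt G (G' z) z)
    (hc : ConvexOn ℝ univ G) (x y : F) :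
    G x + ⟪G' x, y - x⟫ ≤ G y := by
  set u := y - x with hu
  have φc : ConvexOn ℝ univ (fun s : ℝ => G (x + s • u)) := by
    have := hc.comp_affineMap (AffineMap.lineMap x y : ℝ →ᵃ[ℝ] F)
    have heq : (G ∘ (AffineMap.lineMap x y : ℝ →ᵃ[ℝ] F)) = fun s : ℝ => G (x + s • u) := by
      funext s
      simp [AffineMap.lineMap_apply, hu]
      congr 1
      abel
    rw [heq] at this
    simpa using this
  have h01 : (0:ℝ) < 1 := one_pos
  have := φc.le_slope_of_hasDerivAt (mem_univ (0:ℝ)) (mem_univ (1:ℝ)) h01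
    (myLineDeriv hG x u 0)
  rw [slope_def_field] at this
  simp only [zero_smul, add_zero, one_smul] at this
  have hx1 : x + u = y := by rw [hu]; abel
  rw [hx1] at this
  have : ⟪G' x, u⟫ ≤ (G y - G x) / (1 - 0) := by simpa using this
  simp at this
  linarith [this]

/-- Monotone gradient implies convexity. -/
lemma myConvexOfMono {G : F → ℝ} {G' : F → F} (hG : ∀ z, HasGradientAt G (G' z) z)
    (hmono : ∀ x y, 0 ≤ ⟪G' x - G' y, x - y⟫) :
    ConvexOn ℝ univ G := by
  refine ⟨convex_univ, fun x _ y _ a b ha hb hab => ?_⟩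
  set u := y - x with hu
  have φd : ∀ t : ℝ, HasDerivAt (fun s : ℝ => G (x + s • u)) ⟪G' (x + t • u), u⟫ t :=
    myLineDeriv hG x u
  have φdiff : Differentiable ℝ (fun s : ℝ => G (x + s • u)) :=
    fun t => (φd t).differentiableAt
  have φmono : Monotone (deriv fun s : ℝ => G (x + s • u)) := by
    intro s t hst
    rw [(φd s).deriv, (φd t).deriv]
    have h := hmono (x + t • u) (x + s • u)
    have hdiff : (x + t • u) - (x + s • u) = (t - s) • u := by
      rw [sub_smul]; abel
    rw [hdiff] at h
    rw [real_inner_smul_right] at h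
    rcases eq_or_lt_of_le hst with rfl | hlt
    · exact le_rfl
    · have hts : 0 < t - s := by linarith
      have hpos : 0 ≤ ⟪G' (x + t • u) - G' (x + s • u), u⟫ := by nlinarith
      rw [inner_sub_left] at hpos
      linarith
  have φc : ConvexOn ℝ univ (fun s : ℝ => G (x + s • u)) :=
    φmono.convexOn_univ_of_deriv φdiff
  have key := φc.2 (mem_univ (0:ℝ)) (mem_univ (1:ℝ)) ha hb hab
  simp only [smul_eq_mul, mul_zero, mul_one, zero_add, zero_smul, add_zero, one_smul] at key
  have h1 : x + u = y := by rw [hu]; abel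
  have h2 : a • x + b • y = x + b • u := by
    have ha' : a = 1 - b := by linarith
    rw [hu, ha']
    module
  rw [h1] at key
  simp only [smul_eq_mul]
  rw [h2]
  exact key

/-- Convexity implies gradient monotonicity. -/
lemma myMonoOfConvex {G : F → ℝ} {G' : F → F} (hG : ∀ z, HasGradientAt G (G' z) z)
    (hc : ConvexOn ℝ univ G) (x y : F) : 0 ≤ ⟪G' x - G' y, x - y⟫ := by
  have h1 := myGradIneq hG hc x y
  have h2 := myGradIneq hG hc y x
  have e1 : ⟪G' x, x - y⟫ = - ⟪G' x, y - x⟫ := by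
    rw [← inner_neg_right]; congr 1; abel
  rw [inner_sub_left, e1]
  linarith

lemma myGradSub {G H : F → ℝ} {a b : F} {x : F} (hG : HasGradientAt G a x)
    (hH : HasGradientAt H b x) :
    HasGradientAt (fun z => G z - H z) (a - b) x := by
  have := hG.hasFDerivAt.sub hH.hasFDerivAt
  rw [hasGradientAt_iff_hasFDerivAt, map_sub]
  exact this

lemma myGradNormSq (c : ℝ) (x : F) :
    HasGradientAt (fun z : F => c * ‖z‖ ^ 2) ((2 * c) • x) x := by
  have h1 : HasFDerivAt (fun z : F => ⟪z, z⟫)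
      ((fderivInnerCLM ℝ ((x : F), (x : F))).comp
        ((ContinuousLinearMap.id ℝ F).prod (ContinuousLinearMap.id ℝ F))) x :=
    (hasFDerivAt_id x).inner ℝ (hasFDerivAt_id x)
  have h2 := h1.const_mul c
  rw [hasGradientAt_iff_hasFDerivAt]
  have heq : (fun z : F => c * ‖z‖ ^ 2) = fun z : F => c * ⟪z, z⟫ := by
    funext z; rw [real_inner_self_eq_norm_sq]
  rw [heq]
  convert h2 using 1
  · rfl
  ext v
  simp [toDual_apply_apply, inner_smul_left, real_inner_comm]
  ring

lemma myGradLinear (w : F) (x : F) : HasGradientAt (fun z => ⟪w, z⟫) w x := by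
  rw [hasGradientAt_iff_hasFDerivAt]
  exact (toDual ℝ F w).hasFDerivAt

/-- Descent lemma. -/
lemma myDescent {G : F → ℝ} {G' : F → F} (hG : ∀ z, HasGradientAt G (G' z) z) {c : ℝ}
    (hc2 : ConvexOn ℝ univ (fun z => c / 2 * ‖z‖ ^ 2 - G z)) (x y : F) :
    G y ≤ G x + ⟪G' x, y - x⟫ + c / 2 * ‖y - x‖ ^ 2 := by
  have hH : ∀ z, HasGradientAt (fun w => c / 2 * ‖w‖ ^ 2 - G w) (c • z - G' z) z := by
    intro z
    simpa [show (2 * (c/2) : ℝ) = c by ring] using myGradSub (myGradNormSq (c/2) z) (hG z)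
  have h := myGradIneq hH hc2 x y
  have hin : ⟪c • x - G' x, y - x⟫ = c * ⟪x, y - x⟫ - ⟪G' x, y - x⟫ := by
    rw [inner_sub_left, real_inner_smul_left]
  rw [hin] at h
  have hexp : ⟪x, y - x⟫ = ⟪x, y⟫ - ‖x‖ ^ 2 := by
    rw [inner_sub_right, real_inner_self_eq_norm_sq]
  rw [hexp] at h
  have hns : ‖y - x‖ ^ 2 = ‖y‖ ^ 2 - 2 * ⟪y, x⟫ + ‖x‖ ^ 2 := norm_sub_sq_real y x
  have hyx : ⟪y, x⟫ = ⟪x, y⟫ := real_inner_comm x y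
  rw [hns, hyx]
  nlinarith [h]

/-- Co-coercivity. -/
lemma myCocoercive {G : F → ℝ} {G' : F → F} (hG : ∀ z, HasGradientAt G (G' z) z)
    (hconv : ConvexOn ℝ univ G) {c : ℝ} (hcpos : 0 < c)
    (hc2 : ConvexOn ℝ univ (fun z => c / 2 * ‖z‖ ^ 2 - G z)) (x y : F) :
    ‖G' x - G' y‖ ^ 2 ≤ c * ⟪G' x - G' y, x - y⟫ := by
  have hCg : ∀ z, HasGradientAt (fun w => c / 2 * ‖w‖ ^ 2 - G w) (c • z - G' z) z := by
    intro z
    simpa [show (2 * (c/2) : ℝ) = c by ring] using myGradSub (myGradNormSq (c/2) z) (hG z)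
  have key : ∀ p q : F, G p + ⟪G' p, q - p⟫ + 1 / (2 * c) * ‖G' q - G' p‖ ^ 2 ≤ G q := by
    intro p q
    have hh' : ∀ z, HasGradientAt (fun z => G z - ⟪G' p, z⟫) (G' z - G' p) z :=
      fun z => myGradSub (hG z) (myGradLinear (G' p) z)
    have hconvh : ConvexOn ℝ univ (fun z => G z - ⟪G' p, z⟫) := by
      apply myConvexOfMono hh'
      intro u v
      have := myMonoOfConvex hG hconv u v
      simpa [sub_sub_sub_cancel_right] using this
    have hg2 : ∀ z, HasGradientAt (fun z => c / 2 * ‖z‖ ^ 2 - (G z - ⟪G' p, z⟫))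
        (c • z - (G' z - G' p)) z := by
      intro z
      have := myGradSub (by
        simpa [show (2 * (c/2) : ℝ) = c by ring] using myGradNormSq (c/2) z) (hh' z)
      exact this
    have hc2h : ConvexOn ℝ univ (fun z => c / 2 * ‖z‖ ^ 2 - (G z - ⟪G' p, z⟫)) := by
      apply myConvexOfMono hg2
      intro u v
      have hm2 := myMonoOfConvex hCg hc2 u v
      have heq : c • u - (G' u - G' p) - (c • v - (G' v - G' p))
          = c • u - G' u - (c • v - G' v) := by module
      rw [heq]
      exact hm2
    set w : F := q - (1/c) • (G' q - G' p) with hw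
    have hminh := myGradIneq hh' hconvh p w
    simp only [sub_self, inner_zero_left, add_zero] at hminh
    have hdesc := myDescent hh' hc2h q w
    have hwq : w - q = -(1/c) • (G' q - G' p) := by rw [hw]; module
    have hi1 : ⟪G' q - G' p, w - q⟫ = -(1/c) * ‖G' q - G' p‖ ^ 2 := by
      rw [hwq, inner_smul_right, real_inner_self_eq_norm_sq]
    have hi2 : c / 2 * ‖w - q‖ ^ 2 = 1 / (2 * c) * ‖G' q - G' p‖ ^ 2 := by
      rw [hwq, norm_smul, Real.norm_eq_abs, abs_neg,
        abs_of_pos (by positivity : (0:ℝ) < 1/c), mul_pow]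
      field_simp
    rw [hi1, hi2] at hdesc
    have hip : ⟪G' p, q - p⟫ = ⟪G' p, q⟫ - ⟪G' p, p⟫ := inner_sub_right _ _ _
    have hc' : -(1/c) * ‖G' q - G' p‖ ^ 2 + 1 / (2 * c) * ‖G' q - G' p‖ ^ 2
        = -(1 / (2 * c) * ‖G' q - G' p‖ ^ 2) := by
      field_simp
      ring
    linarith
  have k1 := key x y
  have k2 := key y x
  have hrev : ‖G' y - G' x‖ = ‖G' x - G' y‖ := norm_sub_rev _ _
  rw [hrev] at k1
  have e1 : ⟪G' x, y - x⟫ = -⟪G' x, x - y⟫ := by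
    rw [← inner_neg_right]; congr 1; abel
  rw [e1] at k1
  have h2c : 1 / (2 * c) * ‖G' x - G' y‖ ^ 2 + 1 / (2 * c) * ‖G' x - G' y‖ ^ 2
      = 1 / c * ‖G' x - G' y‖ ^ 2 := by
    field_simp
    ring
  have hsum : 1 / c * ‖G' x - G' y‖ ^ 2 ≤ ⟪G' x, x - y⟫ - ⟪G' y, x - y⟫ := by
    linarith
  rw [inner_sub_left]
  calc ‖G' x - G' y‖ ^ 2 = c * (1 / c * ‖G' x - G' y‖ ^ 2) := by
        field_simp
    _ ≤ c * (⟪G' x, x - y⟫ - ⟪G' y, x - y⟫) :=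
        mul_le_mul_of_nonneg_left hsum hcpos.le

end helpers

set_option maxHeartbeats 1000000 in
theorem stmt_6 (d : ℕ) (μ L : ℝ) (hμ : 0 < μ) (hμL : μ ≤ L)
    (f : EuclideanSpace ℝ (Fin d) → ℝ) (hf : Differentiable ℝ f)
    (hsmooth : ∀ x y, ‖gradient f x - gradient f y‖ ≤ L * ‖x - y‖)
    (hsc : ConvexOn ℝ Set.univ (fun x => f x - μ / 2 * ‖x‖ ^ 2))
    (xstar : EuclideanSpace ℝ (Fin d)) (hcrit : gradient f xstar = 0)
    (x : ℕ → EuclideanSpace ℝ (Fin d))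
    (hiter : ∀ k, x (k + 1) = x k - (1 / L) • gradient f (x k)) :
    ∀ k, ‖x (k + 1) - xstar‖ ≤ (1 - μ / L) * ‖x k - xstar‖ := by
  intro k
  have hL : 0 < L := lt_of_lt_of_le hμ hμL
  have hL' : L ≠ 0 := ne_of_gt hL
  set a : EuclideanSpace ℝ (Fin d) := x k - xstar with ha
  set Δ : EuclideanSpace ℝ (Fin d) := gradient f (x k) with hΔ
  set v : EuclideanSpace ℝ (Fin d) := Δ - μ • a with hv
  have hfG : ∀ z, HasGradientAt f (gradient f z) z := fun z => (hf z).hasGradientAt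
  have hgG : ∀ z, HasGradientAt (fun w => f w - μ / 2 * ‖w‖ ^ 2)
      (gradient f z - μ • z) z := by
    intro z
    simpa [show (2 * (μ/2) : ℝ) = μ by ring] using myGradSub (hfG z) (myGradNormSq (μ/2) z)
  have hh1G : ∀ z, HasGradientAt (fun w => L / 2 * ‖w‖ ^ 2 - f w)
      (L • z - gradient f z) z := by
    intro z
    simpa [show (2 * (L/2) : ℝ) = L by ring] using myGradSub (myGradNormSq (L/2) z) (hfG z)
  have hh1conv : ConvexOn ℝ Set.univ (fun w => L / 2 * ‖w‖ ^ 2 - f w) := by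
    apply myConvexOfMono hh1G
    intro p q
    have hcs : ⟪gradient f p - gradient f q, p - q⟫_ℝ
        ≤ ‖gradient f p - gradient f q‖ * ‖p - q‖ := real_inner_le_norm _ _
    have hns := hsmooth p q
    have expand : ⟪L • p - gradient f p - (L • q - gradient f q), p - q⟫_ℝ
        = L * ‖p - q‖ ^ 2 - ⟪gradient f p - gradient f q, p - q⟫_ℝ := by
      have h0 : L • p - gradient f p - (L • q - gradient f q)
          = L • (p - q) - (gradient f p - gradient f q) := by module
      rw [h0, inner_sub_left, real_inner_smul_left, real_inner_self_eq_norm_sq]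
    rw [expand]
    nlinarith [norm_nonneg (p - q), norm_nonneg (gradient f p - gradient f q)]
  have hveq : gradient f (x k) - μ • (x k) - (gradient f xstar - μ • xstar) = v := by
    rw [hcrit, hv, hΔ, ha]; module
  have hva : 0 ≤ ⟪v, a⟫_ℝ := by
    have := myMonoOfConvex hgG hsc (x k) xstar
    rwa [hveq] at this
  have hcoco : ∀ c : ℝ, L - μ ≤ c → 0 < c → ‖v‖ ^ 2 ≤ c * ⟪v, a⟫_ℝ := by
    intro c hcLμ hcpos
    have hc2 : ConvexOn ℝ Set.univ
        (fun w => c / 2 * ‖w‖ ^ 2 - (f w - μ / 2 * ‖w‖ ^ 2)) := by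
      have hgrad : ∀ z, HasGradientAt (fun w => c / 2 * ‖w‖ ^ 2 - (f w - μ / 2 * ‖w‖ ^ 2))
          (c • z - (gradient f z - μ • z)) z := by
        intro z
        exact myGradSub (by
          simpa [show (2 * (c/2) : ℝ) = c by ring] using myGradNormSq (c/2) z) (hgG z)
      apply myConvexOfMono hgrad
      intro p q
      have hm := myMonoOfConvex hh1G hh1conv p q
      have expand : ⟪c • p - (gradient f p - μ • p) - (c • q - (gradient f q - μ • q)), p - q⟫_ℝ
          = (c - (L - μ)) * ‖p - q‖ ^ 2
            + ⟪L • p - gradient f p - (L • q - gradient f q), p - q⟫_ℝ := by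
        have h0 : c • p - (gradient f p - μ • p) - (c • q - (gradient f q - μ • q))
            = (c - (L - μ)) • (p - q) + (L • p - gradient f p - (L • q - gradient f q)) := by
          module
        rw [h0, inner_add_left, real_inner_smul_left, real_inner_self_eq_norm_sq]
      rw [expand]
      nlinarith [sq_nonneg ‖p - q‖]
    have := myCocoercive hgG hsc hcpos hc2 (x k) xstar
    rwa [hveq, show x k - xstar = a from ha.symm ▸ rfl] at this
  have hvmain : ‖v‖ ^ 2 ≤ (L - μ) * ⟪v, a⟫_ℝ := by
    rcases eq_or_lt_of_le hva with hP | hPpos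
    · have h0 := hcoco (L - μ + 1) (by linarith) (by nlinarith)
      rw [← hP] at h0 ⊢
      simpa using h0
    · apply le_of_forall_pos_le_add
      intro ε hε
      have hdiv : 0 < ε / ⟪v, a⟫_ℝ := div_pos hε hPpos
      have hc := hcoco (L - μ + ε / ⟪v, a⟫_ℝ) (by linarith) (by nlinarith)
      calc ‖v‖ ^ 2 ≤ (L - μ + ε / ⟪v, a⟫_ℝ) * ⟪v, a⟫_ℝ := hc
        _ = (L - μ) * ⟪v, a⟫_ℝ + ε := by
            rw [add_mul, div_mul_cancel₀ _ (ne_of_gt hPpos)]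
  have hxe : x (k + 1) - xstar = a - (1 / L) • Δ := by
    rw [hiter k, ha, hΔ]; module
  have hcoef : 0 ≤ 1 - μ / L := by
    have : μ / L ≤ 1 := (div_le_one hL).mpr hμL
    linarith
  have hsq : ‖a - (1 / L) • Δ‖ ^ 2 ≤ ((1 - μ / L) * ‖a‖) ^ 2 := by
    have hexp : ‖a - (1 / L) • Δ‖ ^ 2
        = ‖a‖ ^ 2 - 2 * ((1 / L) * ⟪a, Δ⟫_ℝ) + (1 / L) ^ 2 * ‖Δ‖ ^ 2 := by
      rw [norm_sub_sq_real, inner_smul_right, norm_smul, Real.norm_eq_abs,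
        abs_of_pos (by positivity : (0:ℝ) < 1 / L), mul_pow]
    have hΔv : Δ = v + μ • a := by rw [hv]; module
    have hiΔ : ⟪a, Δ⟫_ℝ = ⟪v, a⟫_ℝ + μ * ‖a‖ ^ 2 := by
      rw [hΔv, inner_add_right, inner_smul_right, real_inner_self_eq_norm_sq,
        real_inner_comm]
    have hnΔ : ‖Δ‖ ^ 2 = ‖v‖ ^ 2 + 2 * (μ * ⟪v, a⟫_ℝ) + μ ^ 2 * ‖a‖ ^ 2 := by
      rw [hΔv, norm_add_sq_real, inner_smul_right, norm_smul, Real.norm_eq_abs,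
        abs_of_pos hμ, mul_pow]
    rw [hexp, hiΔ, hnΔ]
    have ht0 : (0:ℝ) < L⁻¹ := by positivity
    rw [div_eq_mul_inv μ L, div_eq_mul_inv 1 L, one_mul]
    have e1 : L⁻¹ * (L - μ) = 1 - L⁻¹ * μ := by field_simp
    have h1 : L⁻¹ * ‖v‖ ^ 2 ≤ (1 - L⁻¹ * μ) * ⟪v, a⟫_ℝ := by
      calc L⁻¹ * ‖v‖ ^ 2 ≤ L⁻¹ * ((L - μ) * ⟪v, a⟫_ℝ) :=
            mul_le_mul_of_nonneg_left hvmain ht0.le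
        _ = (1 - L⁻¹ * μ) * ⟪v, a⟫_ℝ := by rw [← mul_assoc, e1]
    have h3 : L⁻¹ * (L⁻¹ * ‖v‖ ^ 2) ≤ L⁻¹ * ((1 - L⁻¹ * μ) * ⟪v, a⟫_ℝ) :=
      mul_le_mul_of_nonneg_left h1 ht0.le
    have h2 : μ * L⁻¹ ≤ 1 := by
      calc μ * L⁻¹ ≤ L * L⁻¹ := mul_le_mul_of_nonneg_right hμL ht0.le
        _ = 1 := mul_inv_cancel₀ hL'
    have h4 : 0 ≤ L⁻¹ * ⟪v, a⟫_ℝ := mul_nonneg ht0.le hva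
    have hprod : 0 ≤ (L⁻¹ * ⟪v, a⟫_ℝ) * (1 - μ * L⁻¹) :=
      mul_nonneg h4 (by linarith)
    nlinarith [h3, hprod]
  rw [hxe]
  have := le_of_pow_le_pow_left₀ (two_ne_zero) (mul_nonneg hcoef (norm_nonneg a)) hsq
  exact this
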